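/- arXiv:0903.3843 — 2 statements merged into one kernel-verified Lean document; each statement's English description precedes it below -/
import Mathlib

section
/- Let E : ℝ≥0 → ℝ≥0 be a non-increasing function and suppose there exists C > 0 such that for all t ≥ 0, ∫_t^∞ E(s) ds ≤ C·E(t). Then for all t ≥ C, E(t) ≤ E(0)·exp(1 − t/C). -/
open MeasureTheory Set

/-- Komornik's integral lemma, exponential case (α = 0). -/
theorem stmt0 (E : ℝ → ℝ) (hpos : ∀ t, 0 ≤ E t)
    (hmono : AntitoneOn E (Ici (0 : ℝ)))
    (hint : ∀ t, 0 ≤ t → IntegrableOn E (Ioi t))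
    (C : ℝ) (hC : 0 < C)
    (h : ∀ t, 0 ≤ t → (∫ s in Ioi t, E s) ≤ C * E t) :
    ∀ t, C ≤ t → E t ≤ E 0 * Real.exp (1 - t / C) := by
  set F : ℝ → ℝ := fun t => ∫ s in Ioi t, E s with hF
  have hFnonneg : ∀ t, 0 ≤ F t := fun t =>
    setIntegral_nonneg measurableSet_Ioi (fun x _ => hpos x)
  -- splitting
  have hsplit : ∀ t b : ℝ, 0 ≤ t → t ≤ b → F t = (∫ s in Ioc t b, E s) + F b := by
    intro t b ht htb
    rw [hF]
    simp only
    rw [← Set.Ioc_union_Ioi_eq_Ioi htb,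
      setIntegral_union (Set.Ioc_disjoint_Ioi le_rfl) measurableSet_Ioi
        ((hint t ht).mono_set Set.Ioc_subset_Ioi_self)
        ((hint b (ht.trans htb)).mono_set (by rfl))]
  -- lower bound on integral over Ioc
  have hIoc : ∀ t b : ℝ, 0 ≤ t → t ≤ b → (b - t) * E b ≤ ∫ s in Ioc t b, E s := by
    intro t b ht htb
    have h1 : (∫ _ in Ioc t b, E b) ≤ ∫ s in Ioc t b, E s := by
      apply setIntegral_mono_on (integrableOn_const measure_Ioc_lt_top.ne)
        ((hint t ht).mono_set Set.Ioc_subset_Ioi_self) measurableSet_Ioc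
      intro x hx
      exact hmono (le_of_lt (lt_of_le_of_lt ht hx.1)) (le_trans (ht.trans htb) le_rfl : (0:ℝ) ≤ b) hx.2
    calc (b - t) * E b = (∫ _ in Ioc t b, E b) := by
          rw [setIntegral_const, measureReal_def, Real.volume_Ioc, ENNReal.toReal_ofReal (by linarith), smul_eq_mul]
      _ ≤ _ := h1
  -- key step
  have hstep : ∀ t h' : ℝ, 0 ≤ t → 0 < h' → F (t + h') ≤ F t * (C / (C + h')) := by
    intro t h' ht hh
    have hb : t ≤ t + h' := by linarith
    have h1 := hsplit t (t + h') ht hb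
    have h2 := hIoc t (t + h') ht hb
    have h3 : F (t + h') ≤ C * E (t + h') := h (t + h') (by linarith)
    have h4 : F (t + h') * (C + h') ≤ F t * C := by
      have h2' : h' * E (t + h') ≤ ∫ s in Ioc t (t + h'), E s := by
        simpa using h2
      nlinarith [hFnonneg (t + h'), hpos (t + h')]
    have hCh : 0 < C + h' := by linarith
    rw [mul_div_assoc', le_div_iff₀ hCh]
    linarith
  -- iterate
  have hiter : ∀ h' : ℝ, 0 < h' → ∀ n : ℕ, F (n * h') ≤ F 0 * (C / (C + h')) ^ n := by
    intro h' hh n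
    induction n with
    | zero => simp
    | succ n ih =>
      have h1 : F ((n : ℝ) * h' + h') ≤ F ((n : ℝ) * h') * (C / (C + h')) :=
        hstep _ _ (by positivity) hh
      have hr : (0:ℝ) ≤ C / (C + h') := by positivity
      have hc : ((n + 1 : ℕ) : ℝ) * h' = (n : ℝ) * h' + h' := by push_cast; ring
      rw [hc, pow_succ, ← mul_assoc]
      calc F ((n : ℝ) * h' + h') ≤ F ((n : ℝ) * h') * (C / (C + h')) := h1
        _ ≤ F 0 * (C / (C + h')) ^ n * (C / (C + h')) :=
            mul_le_mul_of_nonneg_right ih hr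
  -- decay of F
  have hFdecay : ∀ t : ℝ, 0 ≤ t → F t ≤ F 0 * Real.exp (-(t / C)) := by
    intro t ht
    rcases eq_or_lt_of_le ht with h0 | ht
    · rw [← h0]; simp
    · have key : ∀ n : ℕ, 0 < n → F t ≤ F 0 * ((1 + t / C / n) ^ n)⁻¹ := by
        intro n hn
        have hn' : (0 : ℝ) < n := by exact_mod_cast hn
        have hh : 0 < t / n := div_pos ht hn'
        have hit := hiter (t / n) hh n
        have ht' : (n : ℝ) * (t / n) = t := by field_simp
        rw [ht'] at hit
        have heq : C / (C + t / n) = (1 + t / C / n)⁻¹ := by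
          rw [inv_eq_one_div, div_eq_div_iff (by positivity) (by positivity)]
          field_simp
        rwa [heq, inv_pow] at hit
      have hlim : Filter.Tendsto (fun n : ℕ => F 0 * ((1 + t / C / n) ^ n)⁻¹)
          Filter.atTop (nhds (F 0 * Real.exp (-(t / C)))) := by
        have h1 := Real.tendsto_one_add_div_pow_exp (t / C)
        have h2 := h1.inv₀ (Real.exp_ne_zero _)
        rw [← Real.exp_neg] at h2
        exact h2.const_mul (F 0)
      exact ge_of_tendsto hlim (Filter.eventually_atTop.2 ⟨1, fun n hn => key n hn⟩)
  -- conclude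
  intro t htC
  have ha : 0 ≤ t - C := by linarith
  have hta : t - C ≤ t := by linarith
  have h1 := hIoc (t - C) t ha hta
  have h2 := hsplit (t - C) t ha hta
  have h3 := hFdecay (t - C) ha
  have h4 : F 0 ≤ C * E 0 := h 0 le_rfl
  have h5 : C * E t ≤ F (t - C) := by
    have : (t - (t - C)) * E t = C * E t := by ring_nf
    rw [this] at h1
    linarith [hFnonneg t]
  have hexp : Real.exp (-((t - C) / C)) = Real.exp (1 - t / C) := by
    congr 1
    field_simp
    ring
  have h6 : C * E t ≤ C * E 0 * Real.exp (1 - t / C) := by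
    calc C * E t ≤ F (t - C) := h5
      _ ≤ F 0 * Real.exp (-((t - C) / C)) := h3
      _ ≤ C * E 0 * Real.exp (1 - t / C) := by
          rw [hexp]
          exact mul_le_mul_of_nonneg_right h4 (Real.exp_nonneg _)
  have := (mul_le_mul_iff_right₀ hC).1 (by linarith : C * E t ≤ C * (E 0 * Real.exp (1 - t / C)))
  exact this
end

section
/- Let n ≥ 1, d > 0, A a skew-symmetric n×n real matrix, x₀ ∈ ℝⁿ, and F ∈ W^{1,∞}(Ω; ℝⁿ) with ess sup_Ω ‖(∇F)^s‖ < d/n, where ‖·‖ is the spectral (operator 2-)norm. Then m(x) = (dI + A)(x − x₀) + F(x) satisfies ess inf_Ω div(m) > ess sup_Ω (div(m) − 2λ_m). -/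
open MeasureTheory Real Set Matrix

noncomputable section

abbrev Euc (n : ℕ) := EuclideanSpace ℝ (Fin n)

/-- The divergence of a vector field: the trace of its Jacobian. -/
def vdiv {n : ℕ} (m : Euc n → Euc n) (x : Euc n) : ℝ :=
  LinearMap.trace ℝ (Euc n) (fderiv ℝ m x).toLinearMap

/-- The smallest eigenvalue `λ_m(x)` of the symmetric part of the Jacobian of `m` at `x`,
expressed as the infimum of the Rayleigh quotient over the unit sphere. -/
def lamMin {n : ℕ} (m : Euc n → Euc n) (x : Euc n) : ℝ :=
  ⨅ v : Metric.sphere (0 : Euc n) 1, (inner ℝ (fderiv ℝ m x (v : Euc n)) (v : Euc n) : ℝ)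

/-- The cone condition: `ess inf_Ω div(m) > ess sup_Ω (div(m) - 2 λ_m)`. -/
def coneCond {n : ℕ} (m : Euc n → Euc n) (Ω : Set (Euc n)) : Prop :=
  essSup (fun x => vdiv m x - 2 * lamMin m x) (volume.restrict Ω) <
    essInf (fun x => vdiv m x) (volume.restrict Ω)

/-- `c(m) = (1/2)(ess inf_Ω div(m) - ess sup_Ω (div(m) - 2 λ_m))`. -/
def cConst {n : ℕ} (m : Euc n → Euc n) (Ω : Set (Euc n)) : ℝ :=
  (1/2) * (essInf (fun x => vdiv m x) (volume.restrict Ω) -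
    essSup (fun x => vdiv m x - 2 * lamMin m x) (volume.restrict Ω))

/-- `a₀ = (1/2)(ess inf_Ω div(m) + ess sup_Ω (div(m) - 2 λ_m))`. -/
def a0Const {n : ℕ} (m : Euc n → Euc n) (Ω : Set (Euc n)) : ℝ :=
  (1/2) * (essInf (fun x => vdiv m x) (volume.restrict Ω) +
    essSup (fun x => vdiv m x - 2 * lamMin m x) (volume.restrict Ω))

/-- The Laplacian as the divergence of the gradient. -/
def lap {n : ℕ} (f : Euc n → ℝ) (x : Euc n) : ℝ := vdiv (fun y => gradient f y) x

section Aux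


lemma trace_eq_sum_inner {n : ℕ} (b : OrthonormalBasis (Fin n) ℝ (Euc n))
    (T : Euc n →ₗ[ℝ] Euc n) :
    LinearMap.trace ℝ (Euc n) T = ∑ i, (inner ℝ (b i) (T (b i)) : ℝ) := by
  rw [LinearMap.trace_eq_matrix_trace ℝ b.toBasis, Matrix.trace]
  refine Finset.sum_congr rfl fun i _ => ?_
  rw [Matrix.diag_apply, LinearMap.toMatrix_apply, b.coe_toBasis_repr_apply,
    b.repr_apply_apply, b.coe_toBasis]

lemma skew_inner {n : ℕ} (A : Matrix (Fin n) (Fin n) ℝ) (hskew : Aᵀ = -A) (v : Euc n) :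
    (inner ℝ (Matrix.toEuclideanLin A v) v : ℝ) = 0 := by
  have h1 : Matrix.toEuclideanLin Aᴴ = LinearMap.adjoint (Matrix.toEuclideanLin A) :=
    Matrix.toEuclideanLin_conjTranspose_eq_adjoint A
  have h2 : Aᴴ = -A := by rw [Matrix.conjTranspose, ← hskew]; ext i j; simp
  have := LinearMap.adjoint_inner_left (Matrix.toEuclideanLin A) v v
  rw [← h1, h2] at this
  simp only [map_neg, LinearMap.neg_apply, inner_neg_left] at this
  have comm : (inner ℝ v (Matrix.toEuclideanLin A v) : ℝ) = inner ℝ (Matrix.toEuclideanLin A v) v :=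
    real_inner_comm _ _
  linarith [this, comm]

lemma sym_ray {n : ℕ} (T : Euc n →L[ℝ] Euc n) (v : Euc n) :
    (inner ℝ (((1/2 : ℝ) • (T + ContinuousLinearMap.adjoint T)) v) v : ℝ) = inner ℝ (T v) v := by
  simp only [ContinuousLinearMap.smul_apply, ContinuousLinearMap.add_apply,
    inner_smul_left, inner_add_left, ContinuousLinearMap.adjoint_inner_left]
  simp only [starRingEnd_apply, star_trivial]
  rw [real_inner_comm v (T v)]
  ring

lemma ray_abs_le {n : ℕ} (S : Euc n →L[ℝ] Euc n) (v : Euc n) (hv : ‖v‖ = 1) :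
    |(inner ℝ (S v) v : ℝ)| ≤ ‖S‖ := by
  calc |(inner ℝ (S v) v : ℝ)| ≤ ‖S v‖ * ‖v‖ := abs_real_inner_le_norm _ _
  _ ≤ (‖S‖ * ‖v‖) * ‖v‖ := by
      have := S.le_opNorm v
      nlinarith [norm_nonneg (S v), norm_nonneg v]
  _ = ‖S‖ := by rw [hv]; ring

lemma lin_ray {n : ℕ} (d : ℝ) (A : Matrix (Fin n) (Fin n) ℝ) (hskew : Aᵀ = -A)
    (v : Euc n) (hv : ‖v‖ = 1) :
    (inner ℝ (Matrix.toEuclideanLin (d • (1 : Matrix (Fin n) (Fin n) ℝ) + A) v) v : ℝ) = d := by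
  rw [map_add, _root_.map_smul]
  simp only [LinearMap.add_apply, LinearMap.smul_apply, inner_add_left, inner_smul_left]
  rw [skew_inner A hskew v]
  have h1 : Matrix.toEuclideanLin (1 : Matrix (Fin n) (Fin n) ℝ) v = v := by
    rw [Matrix.toEuclideanLin_apply]
    simp
  rw [h1, real_inner_self_eq_norm_sq, hv]
  simp

lemma core {n : ℕ} (hn : 1 ≤ n) (d : ℝ) (A : Matrix (Fin n) (Fin n) ℝ) (hskew : Aᵀ = -A)
    (T : Euc n →L[ℝ] Euc n)
    (L : Euc n →L[ℝ] Euc n)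
    (hL : ∀ v, L v = Matrix.toEuclideanLin (d • (1 : Matrix (Fin n) (Fin n) ℝ) + A) v)
    (S : Euc n →L[ℝ] Euc n) (hS : S = (1/2 : ℝ) • (T + ContinuousLinearMap.adjoint T)) :
    (n : ℝ) * d - n * ‖S‖ ≤ LinearMap.trace ℝ (Euc n) (L + T).toLinearMap ∧
    LinearMap.trace ℝ (Euc n) (L + T).toLinearMap -
      2 * (⨅ v : Metric.sphere (0 : Euc n) 1, (inner ℝ ((L + T) (v : Euc n)) (v : Euc n) : ℝ)) ≤
      ((n : ℝ) - 2) * d + n * ‖S‖ ∧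
    LinearMap.trace ℝ (Euc n) (L + T).toLinearMap ≤ (n : ℝ) * d + n * ‖S‖ ∧
    (⨅ v : Metric.sphere (0 : Euc n) 1,
      (inner ℝ ((L + T) (v : Euc n)) (v : Euc n) : ℝ)) ≤ d + ‖S‖ := by
  haveI : Nonempty (Fin n) := ⟨⟨0, hn⟩⟩
  haveI : Nontrivial (Euc n) := by
    apply Module.nontrivial_of_finrank_pos (R := ℝ)
    rw [finrank_euclideanSpace_fin]
    omega
  set i₀ : Fin n := ⟨0, hn⟩
  -- key pointwise identity
  have key : ∀ v : Euc n, ‖v‖ = 1 → (inner ℝ ((L + T) v) v : ℝ) = d + inner ℝ (S v) v := by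
    intro v hv
    simp only [ContinuousLinearMap.add_apply, inner_add_left]
    rw [hL, lin_ray d A hskew v hv, hS, sym_ray]
  have habs : ∀ v : Euc n, ‖v‖ = 1 → |(inner ℝ (S v) v : ℝ)| ≤ ‖S‖ := fun v hv => ray_abs_le S v hv
  -- minimizer on the sphere
  set f : Euc n → ℝ := fun v => (inner ℝ ((L + T) v) v : ℝ) with hf
  have hfc : ContinuousOn f (Metric.sphere (0 : Euc n) 1) :=
    (Continuous.inner ((L + T).continuous) continuous_id).continuousOn
  have hsne : (Metric.sphere (0 : Euc n) 1).Nonempty :=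
    NormedSpace.sphere_nonempty.mpr zero_le_one
  obtain ⟨v₀, hv₀mem, hv₀min⟩ :=
    (isCompact_sphere (0 : Euc n) 1).exists_isMinOn hsne hfc
  have hv₀norm : ‖v₀‖ = 1 := by simpa [mem_sphere_zero_iff_norm] using hv₀mem
  haveI : Nonempty (Metric.sphere (0 : Euc n) 1) := ⟨⟨v₀, hv₀mem⟩⟩
  have hinf : (⨅ v : Metric.sphere (0 : Euc n) 1, f ↑v) = f v₀ := by
    apply le_antisymm
    · have hbdd : BddBelow (Set.range fun v : Metric.sphere (0 : Euc n) 1 => f ↑v) := by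
        refine ⟨f v₀, ?_⟩
        rintro y ⟨w, rfl⟩
        exact hv₀min w.2
      exact ciInf_le hbdd (⟨v₀, hv₀mem⟩ : Metric.sphere (0 : Euc n) 1)
    · exact le_ciInf fun w => hv₀min w.2
  -- orthonormal basis through v₀
  have horth : Orthonormal ℝ (Set.restrict {i₀} (fun _ : Fin n => v₀)) := by
    constructor
    · intro i; exact hv₀norm
    · intro i j hij
      have hi : (i : Fin n) = i₀ := i.2
      have hj : (j : Fin n) = i₀ := j.2
      exact absurd (Subtype.ext (hi.trans hj.symm)) hij
  obtain ⟨b, hb⟩ := horth.exists_orthonormalBasis_extension_of_card_eq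
    (by simp [finrank_euclideanSpace_fin])
  have hb0 : b i₀ = v₀ := hb i₀ rfl
  have hbnorm : ∀ i, ‖b i‖ = 1 := fun i => b.orthonormal.1 i
  -- trace formula
  have htr : LinearMap.trace ℝ (Euc n) (L + T).toLinearMap
      = ∑ i, (inner ℝ ((L + T) (b i)) (b i) : ℝ) := by
    rw [trace_eq_sum_inner b]
    exact Finset.sum_congr rfl fun i _ => by
      rw [real_inner_comm]; rfl
  have htr2 : LinearMap.trace ℝ (Euc n) (L + T).toLinearMap
      = (n : ℝ) * d + ∑ i, (inner ℝ (S (b i)) (b i) : ℝ) := by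
    rw [htr]
    rw [Finset.sum_congr rfl fun i _ => key (b i) (hbnorm i)]
    rw [Finset.sum_add_distrib, Finset.sum_const, Finset.card_univ, Fintype.card_fin,
      nsmul_eq_mul]
  have hsum_lo : -((n : ℝ) * ‖S‖) ≤ ∑ i, (inner ℝ (S (b i)) (b i) : ℝ) := by
    have hlo : ∀ i ∈ Finset.univ, -‖S‖ ≤ (inner ℝ (S (b i)) (b i) : ℝ) := fun i _ =>
      neg_le_of_abs_le (habs (b i) (hbnorm i))
    have := Finset.card_nsmul_le_sum Finset.univ _ _ hlo
    rw [Finset.card_univ, Fintype.card_fin, nsmul_eq_mul] at this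
    nlinarith [this]
  have hsum_hi : ∑ i, (inner ℝ (S (b i)) (b i) : ℝ) ≤ (n : ℝ) * ‖S‖ := by
    have hhi : ∀ i ∈ Finset.univ, (inner ℝ (S (b i)) (b i) : ℝ) ≤ ‖S‖ := fun i _ =>
      le_of_abs_le (habs (b i) (hbnorm i))
    have := Finset.sum_le_card_nsmul Finset.univ _ _ hhi
    rw [Finset.card_univ, Fintype.card_fin, nsmul_eq_mul] at this
    nlinarith [this]
  have hinf2 : (⨅ v : Metric.sphere (0 : Euc n) 1,
      (inner ℝ ((L + T) (v : Euc n)) (v : Euc n) : ℝ)) = d + inner ℝ (S v₀) v₀ := by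
    rw [show (⨅ v : Metric.sphere (0 : Euc n) 1,
      (inner ℝ ((L + T) (v : Euc n)) (v : Euc n) : ℝ)) = ⨅ v : Metric.sphere (0 : Euc n) 1, f ↑v
      from rfl, hinf, hf]
    exact key v₀ hv₀norm
  have habs0 : |(inner ℝ (S v₀) v₀ : ℝ)| ≤ ‖S‖ := habs v₀ hv₀norm
  refine ⟨by rw [htr2]; linarith, ?_, by rw [htr2]; linarith, by
    rw [hinf2]
    have := le_of_abs_le habs0
    linarith⟩
  rw [htr2, hinf2]
  -- sum splitting
  have hsplit : (inner ℝ (S (b i₀)) (b i₀) : ℝ)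
      + ∑ i ∈ Finset.univ.erase i₀, (inner ℝ (S (b i)) (b i) : ℝ)
      = ∑ i, (inner ℝ (S (b i)) (b i) : ℝ) :=
    Finset.add_sum_erase Finset.univ (fun i => (inner ℝ (S (b i)) (b i) : ℝ)) (Finset.mem_univ i₀)
  have hcard : (Finset.univ.erase i₀).card = n - 1 := by
    rw [Finset.card_erase_of_mem (Finset.mem_univ i₀), Finset.card_univ, Fintype.card_fin]
  have hup : ∑ i ∈ Finset.univ.erase i₀, (inner ℝ (S (b i)) (b i) : ℝ)
      ≤ ((n : ℝ) - 1) * ‖S‖ := by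
    have h1 := Finset.sum_le_card_nsmul (Finset.univ.erase i₀)
      (fun i => (inner ℝ (S (b i)) (b i) : ℝ)) ‖S‖
      (fun i _ => le_of_abs_le (habs (b i) (hbnorm i)))
    rw [hcard, nsmul_eq_mul] at h1
    have h2 : ((n - 1 : ℕ) : ℝ) = (n : ℝ) - 1 := by
      rw [Nat.cast_sub hn]; norm_num
    rw [h2] at h1
    exact h1
  have habs0 : |(inner ℝ (S v₀) v₀ : ℝ)| ≤ ‖S‖ := habs v₀ hv₀norm
  rw [hb0] at hsplit
  have := neg_le_of_abs_le habs0
  have := le_of_abs_le habs0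
  nlinarith [hsplit, hup]

end Aux

/-- Nonlinear example: `m(x) = (dI + A)(x - x₀) + F(x)` with `A` skew-symmetric and
`ess sup_Ω ‖(∇F)ˢ‖ < d/n` satisfies the cone condition. -/
theorem stmt4 {n : ℕ} (hn : 1 ≤ n) (d : ℝ) (hd : 0 < d)
    (A : Matrix (Fin n) (Fin n) ℝ) (hskew : Aᵀ = -A) (x₀ : Euc n)
    (Ω : Set (Euc n)) (hΩo : IsOpen Ω) (hΩb : Bornology.IsBounded Ω) (hne : Ω.Nonempty)
    (F : Euc n → Euc n) (hF : ContDiff ℝ 1 F)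
    (hFs : essSup
        (fun x => ‖(1/2 : ℝ) • (fderiv ℝ F x + ContinuousLinearMap.adjoint (fderiv ℝ F x))‖)
        (volume.restrict Ω) < d / n) :
    coneCond
      (fun x => Matrix.toEuclideanLin (d • (1 : Matrix (Fin n) (Fin n) ℝ) + A) (x - x₀) + F x)
      Ω := by
  classical
  have hn' : (0 : ℝ) < n := by exact_mod_cast hn
  set M : Matrix (Fin n) (Fin n) ℝ := d • (1 : Matrix (Fin n) (Fin n) ℝ) + A with hM
  set L : Euc n →L[ℝ] Euc n := LinearMap.toContinuousLinearMap (Matrix.toEuclideanLin M)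
    with hLdef
  set m : Euc n → Euc n := fun x => Matrix.toEuclideanLin M (x - x₀) + F x with hm
  set g : Euc n → ℝ := fun x =>
    ‖(1/2 : ℝ) • (fderiv ℝ F x + ContinuousLinearMap.adjoint (fderiv ℝ F x))‖ with hg
  -- derivative of m
  have hderiv : ∀ x, fderiv ℝ m x = L + fderiv ℝ F x := by
    intro x
    have h2 : HasFDerivAt (fun y : Euc n => Matrix.toEuclideanLin M (y - x₀)) L x := by
      have h3 := L.hasFDerivAt.comp x ((hasFDerivAt_id x).sub_const x₀)
      simp only [ContinuousLinearMap.comp_id] at h3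
      exact h3
    exact (h2.add (hF.differentiable one_ne_zero x).hasFDerivAt).fderiv
  -- pointwise bounds
  have hcore : ∀ x : Euc n,
      (n : ℝ) * d - n * g x ≤ vdiv m x ∧
      vdiv m x - 2 * lamMin m x ≤ ((n : ℝ) - 2) * d + n * g x ∧
      vdiv m x ≤ (n : ℝ) * d + n * g x ∧
      lamMin m x ≤ d + g x := by
    intro x
    have h := core hn d A hskew (fderiv ℝ F x) L (fun v => rfl) _ rfl
    have hv : vdiv m x = LinearMap.trace ℝ (Euc n) (L + fderiv ℝ F x).toLinearMap := by
      rw [vdiv, hderiv x]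
    have hl : lamMin m x = ⨅ v : Metric.sphere (0 : Euc n) 1,
        (inner ℝ ((L + fderiv ℝ F x) (v : Euc n)) (v : Euc n) : ℝ) := by
      rw [lamMin]
      exact iInf_congr fun v => by rw [hderiv x]
    rw [hv, hl]
    exact h
  -- measure-theoretic setup
  set μΩ := volume.restrict Ω with hμΩ
  have hμ : μΩ ≠ 0 := fun h =>
    (hΩo.measure_pos volume hne).ne' (Measure.restrict_eq_zero.mp h)
  haveI : (ae μΩ).NeBot := ae_neBot.mpr hμ
  have hmem : ∀ᵐ x ∂μΩ, x ∈ Ω := ae_restrict_mem hΩo.measurableSet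
  -- boundedness of g on Ω
  have hgc : Continuous g := by
    have h1 : Continuous (fderiv ℝ F) := hF.continuous_fderiv one_ne_zero
    have h2 : Continuous fun x => ContinuousLinearMap.adjoint (fderiv ℝ F x) :=
      (ContinuousLinearMap.adjoint (E := Euc n) (F := Euc n) (𝕜 := ℝ)).continuous.comp h1
    exact ((h1.add h2).const_smul (1/2 : ℝ)).norm
  have hK : IsCompact (closure Ω) := hΩb.isCompact_closure
  obtain ⟨z, _, hz⟩ := hK.exists_isMaxOn (hne.mono subset_closure) hgc.continuousOn
  have hC : ∀ x ∈ Ω, g x ≤ g z := fun x hx => hz (subset_closure hx)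
  have hbdd : Filter.IsBoundedUnder (· ≤ ·) (ae μΩ) g := by
    refine ⟨g z, ?_⟩
    rw [Filter.eventually_map]
    filter_upwards [hmem] with x hx using hC x hx
  set s := essSup g μΩ with hs_def
  have hgs : ∀ᵐ x ∂μΩ, g x ≤ s := ae_le_essSup hbdd
  have hs : s < d / n := hFs
  have hns : (n : ℝ) * s < d := by
    rw [lt_div_iff₀ hn'] at hs
    nlinarith
  -- a.e. bounds
  have hup : ∀ᵐ x ∂μΩ, vdiv m x - 2 * lamMin m x ≤ ((n : ℝ) - 2) * d + n * s := by
    filter_upwards [hgs] with x hx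
    have h2 := (hcore x).2.1
    have hmul := mul_le_mul_of_nonneg_left hx hn'.le
    linarith
  have hlo : ∀ᵐ x ∂μΩ, (n : ℝ) * d - n * s ≤ vdiv m x := by
    filter_upwards [hgs] with x hx
    have h1 := (hcore x).1
    have hmul := mul_le_mul_of_nonneg_left hx hn'.le
    linarith
  -- conclude
  have hg0 : ∀ x, 0 ≤ g x := fun x => norm_nonneg _
  have hlo2 : ∀ᵐ x ∂μΩ, (n : ℝ) * d - n * g z - 2 * d - 2 * g z ≤
      vdiv m x - 2 * lamMin m x := by
    filter_upwards [hmem] with x hx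
    have h1 := (hcore x).1
    have h4 := (hcore x).2.2.2
    have h5 := hC x hx
    have hmul := mul_le_mul_of_nonneg_left h5 hn'.le
    linarith
  have hup2 : ∀ᵐ x ∂μΩ, vdiv m x ≤ (n : ℝ) * d + n * g z := by
    filter_upwards [hmem] with x hx
    have h3 := (hcore x).2.2.1
    have h5 := hC x hx
    have hmul := mul_le_mul_of_nonneg_left h5 hn'.le
    linarith
  have hcob1 : Filter.IsCoboundedUnder (· ≤ ·) (ae μΩ)
      (fun x => vdiv m x - 2 * lamMin m x) :=
    Filter.IsBoundedUnder.isCoboundedUnder_le ⟨_, Filter.eventually_map.mpr hlo2⟩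
  have hcob2 : Filter.IsCoboundedUnder (· ≥ ·) (ae μΩ) (fun x => vdiv m x) :=
    Filter.IsBoundedUnder.isCoboundedUnder_ge ⟨_, Filter.eventually_map.mpr hup2⟩
  have hESS : essSup (fun x => vdiv m x - 2 * lamMin m x) μΩ ≤ ((n : ℝ) - 2) * d + n * s :=
    Filter.limsup_le_of_le hcob1 hup
  have hEI : (n : ℝ) * d - n * s ≤ essInf (fun x => vdiv m x) μΩ :=
    Filter.le_liminf_of_le hcob2 hlo
  rw [coneCond]
  calc essSup (fun x => vdiv m x - 2 * lamMin m x) μΩ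
      ≤ ((n : ℝ) - 2) * d + n * s := hESS
    _ < (n : ℝ) * d - n * s := by nlinarith
    _ ≤ essInf (fun x => vdiv m x) μΩ := hEI


end
end
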